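/- Let $\{\varphi_i:i\in I\}$ be a finite family of contractions of $\mathbb{R}^N$ with $\varphi_{i_2}=\varphi_{i_1}+t$ for some distinct $i_1,i_2\in I$ and a nonzero vector $t\in\mathbb{R}^N$, and let $\mu$ be the stationary measure for a strictly positive probability vector $(p_i)_{i\in I}$, i.e. $\mu=\sum_i p_i\,\varphi_i\mu$. If $V\in\mathrm{Gr}(k,N)$ is contained in the orthogonal complement of $t$, then the orthogonal projection $P_V$ is not injective on any Borel set of full $\mu$-measure. -/

import Mathlib

open MeasureTheory Metric Set
open scoped NNReal ENNReal

/-- Proposition 5.2: let `{φ i}` be a finite family of contractions of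
`ℝ^N` with `φ i₂ = φ i₁ + t` for distinct `i₁ ≠ i₂` and `t ≠ 0`, and let `μ` be the
stationary measure for a strictly positive probability vector `(p i)`.  If
`V ∈ Gr(k,N)` is contained in the orthogonal complement of `t`, then the orthogonal
projection onto `V` is not injective on any Borel set of full `μ`-measure. -/
theorem ifs_translate_projection_not_injective (N k : ℕ)
    (I : Type) [Fintype I]
    (φ : I → EuclideanSpace ℝ (Fin N) → EuclideanSpace ℝ (Fin N))
    (hcontr : ∀ i, ∃ r : ℝ≥0, r < 1 ∧ LipschitzWith r (φ i))
    (i₁ i₂ : I) (hne : i₁ ≠ i₂)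
    (t : EuclideanSpace ℝ (Fin N)) (ht : t ≠ 0)
    (htrans : ∀ x, φ i₂ x = φ i₁ x + t)
    (p : I → ℝ≥0∞) (hp : ∀ i, 0 < p i) (hps : ∑ i, p i = 1)
    (μ : Measure (EuclideanSpace ℝ (Fin N))) [IsProbabilityMeasure μ]
    (hstat : μ = ∑ i, p i • μ.map (φ i))
    (V : Submodule ℝ (EuclideanSpace ℝ (Fin N))) (hV : Module.finrank ℝ V = k)
    (hVt : ∀ v ∈ V, (inner ℝ v t : ℝ) = 0) :
    ∀ Y : Set (EuclideanSpace ℝ (Fin N)), MeasurableSet Y → μ Yᶜ = 0 →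
      ¬ Set.InjOn (fun x => (V.orthogonalProjection x : V)) Y := by
  intro Y hY hYc hInj
  -- φ i is measurable
  have hmeas : ∀ i, Measurable (φ i) := fun i => by
    obtain ⟨r, _, hlip⟩ := hcontr i
    exact hlip.continuous.measurable
  -- each pushforward gives Yᶜ measure zero
  have hmap0 : ∀ i, μ (φ i ⁻¹' Yᶜ) = 0 := by
    intro i
    have h1 : (∑ j, p j • μ.map (φ j)) Yᶜ = 0 := by rw [← hstat]; exact hYc
    rw [Measure.finset_sum_apply] at h1
    have h2 : (p i • μ.map (φ i)) Yᶜ = 0 := by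
      have hle : (p i • μ.map (φ i)) Yᶜ ≤ ∑ j, (p j • μ.map (φ j)) Yᶜ :=
        Finset.single_le_sum (f := fun j => (p j • μ.map (φ j)) Yᶜ) (fun j _ => zero_le) (Finset.mem_univ i)
      rw [h1] at hle
      exact le_antisymm hle (zero_le)
    rw [Measure.smul_apply, smul_eq_mul, mul_eq_zero] at h2
    rcases h2 with h2 | h2
    · exact absurd h2 (hp i).ne'
    · rwa [Measure.map_apply (hmeas i) hY.compl] at h2
  -- the intersection of preimages has full measure, hence is nonempty
  have hfull : μ ((φ i₁ ⁻¹' Y) ∩ (φ i₂ ⁻¹' Y)) ≠ 0 := by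
    intro h0
    have : μ Set.univ ≤ μ (φ i₁ ⁻¹' Yᶜ) + μ (φ i₂ ⁻¹' Yᶜ) + μ ((φ i₁ ⁻¹' Y) ∩ (φ i₂ ⁻¹' Y)) := by
      refine le_trans (measure_mono ?_) (le_trans (measure_union_le _ _)
        (add_le_add (measure_union_le _ _) le_rfl))
      intro x _
      by_cases h1 : φ i₁ x ∈ Y
      · by_cases h2 : φ i₂ x ∈ Y
        · exact Or.inr ⟨h1, h2⟩
        · exact Or.inl (Or.inr h2)
      · exact Or.inl (Or.inl h1)
    rw [hmap0 i₁, hmap0 i₂, h0] at this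
    simp [measure_univ] at this
  obtain ⟨x, hx1, hx2⟩ := MeasureTheory.nonempty_of_measure_ne_zero hfull
  -- t is orthogonal to V
  have htV : t ∈ Vᗮ := (Submodule.mem_orthogonal V t).2 hVt
  have hproj : V.orthogonalProjection (φ i₁ x) = V.orthogonalProjection (φ i₂ x) := by
    rw [htrans x, map_add, Submodule.orthogonalProjectionOnto_apply_of_mem_orthogonal htV,
      add_zero]
  have := hInj hx1 hx2 (by simpa using hproj)
  have : φ i₁ x = φ i₂ x := this
  rw [htrans x, left_eq_add] at this
  exact ht this
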